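/- arXiv:2102.10444 — 11 statements merged into one kernel-verified Lean document; each statement's English description precedes it below -/
import Mathlib

section
/- If X is a topological space such that for every topological space Y the projection π_Y : X × Y → Y is a closed map, then X is compact. -/
theorem stmt_1 {X : Type u} [TopologicalSpace X]
    (h : ∀ (Y : Type u) [TopologicalSpace Y], IsClosedMap (Prod.snd : X × Y → Y)) :
    CompactSpace X := by
  have hp : IsProperMap (fun _ : X => (PUnit.unit : PUnit.{u+1})) := by
    rw [isProperMap_iff_universally_closed]
    refine ⟨continuous_const, fun Z _ => ?_⟩
    have h1 : IsClosedMap (fun z : Z => ((PUnit.unit : PUnit.{u+1}), z)) :=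
      (Homeomorph.punitProd Z).symm.isClosedMap
    have := h1.comp (h Z)
    convert this using 1
    funext ⟨a, b⟩; rfl
  constructor
  have := hp.isCompact_preimage (isCompact_singleton (x := PUnit.unit))
  simpa using this
end

section
/- Let κ be a limit ordinal and let X = ∏_{α<κ} X_α be a product of topological spaces. Suppose that for each β with 0 < β < κ, the projection from ∏_{α≤β} X_α onto ∏_{α<β} X_α is a closed map. Then for each β < κ, the projection from X onto ∏_{α<β} X_α is a closed map. -/
open Set

namespace Stmt4Aux

variable {X : Ordinal → Type*} [∀ α, TopologicalSpace (X α)]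

/-- Restriction map between partial products. -/
def res {γ δ : Ordinal} (h : γ ≤ δ) (f : ∀ a : Set.Iio δ, X a.1) (a : Set.Iio γ) : X a.1 :=
  f ⟨a.1, Set.mem_Iio.mpr (lt_of_lt_of_le (Set.mem_Iio.mp a.2) h)⟩

theorem continuous_res {γ δ : Ordinal} (h : γ ≤ δ) : Continuous (res (X := X) h) :=
  continuous_pi fun _ => continuous_apply _

theorem res_res {γ δ ε : Ordinal} (h1 : γ ≤ δ) (h2 : δ ≤ ε) (f : ∀ a : Set.Iio ε, X a.1) :
    res h1 (res h2 f) = res (h1.trans h2) f := rfl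

theorem res_rfl {γ : Ordinal} (f : ∀ a : Set.Iio γ, X a.1) : res le_rfl f = f := rfl

theorem isClosed_of_subsingleton {Y : Type*} [TopologicalSpace Y] [Subsingleton Y]
    (s : Set Y) : IsClosed s := by
  rcases s.eq_empty_or_nonempty with h | ⟨x, hx⟩
  · simp [h]
  · convert isClosed_univ
    ext y
    simpa [Subsingleton.elim y x] using hx

def toSucc (γ : Ordinal) (f : ∀ a : Set.Iio (γ + 1), X a.1) (a : Set.Iic γ) : X a.1 :=
  f ⟨a.1, Set.mem_Iio.mpr (lt_of_le_of_lt (Set.mem_Iic.mp a.2) (Order.lt_add_one_iff.mpr le_rfl))⟩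

def ofSucc (γ : Ordinal) (f : ∀ a : Set.Iic γ, X a.1) (a : Set.Iio (γ + 1)) : X a.1 :=
  f ⟨a.1, Set.mem_Iic.mpr (Order.lt_add_one_iff.mp (Set.mem_Iio.mp a.2))⟩

theorem continuous_ofSucc (γ : Ordinal) : Continuous (ofSucc (X := X) γ) :=
  continuous_pi fun _ => continuous_apply _

theorem isClosedMap_toSucc (γ : Ordinal) : IsClosedMap (toSucc (X := X) γ) := by
  intro C hC
  have key : toSucc (X := X) γ '' C = ofSucc γ ⁻¹' C := by
    ext g
    constructor
    · rintro ⟨f, hf, rfl⟩; exact hf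
    · intro hg; exact ⟨ofSucc γ g, hg, rfl⟩
  rw [key]
  exact hC.preimage (continuous_ofSucc γ)


theorem res_succ_closed {κ : Ordinal}
    (h : ∀ β : Ordinal, 0 < β → β < κ →
      IsClosedMap (X := ∀ α : Set.Iic β, X α.1) (Y := ∀ a : Set.Iio β, X a.1)
        (fun f a => f ⟨a.1, Set.mem_Iic.mpr (Set.mem_Iio.mp a.2).le⟩))
    (γ : Ordinal) (hγ : γ < κ) :
    IsClosedMap (res (X := X) (le_of_lt (Order.lt_add_one_iff.mpr (le_refl γ)))) := by
  rcases eq_or_lt_of_le (zero_le (a := γ)) with h0 | h0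
  · haveI : IsEmpty (Set.Iio (0 : Ordinal)) :=
      ⟨fun a => (not_lt_of_ge (zero_le (a := a.1))) (Set.mem_Iio.mp a.2)⟩
    subst h0
    intro C _
    exact isClosed_of_subsingleton _
  · have hmain := h γ h0 hγ
    show IsClosedMap
      ((fun f (a : Set.Iio γ) => f ⟨a.1, Set.mem_Iic.mpr (Set.mem_Iio.mp a.2).le⟩) ∘ toSucc γ)
    exact hmain.comp (isClosedMap_toSucc γ)

theorem mem_closure_res {κ lam : Ordinal} (hlam : lam ≤ κ) (A : Set (∀ a : Set.Iio κ, X a.1))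
    (z : ∀ a : Set.Iio lam, X a.1)
    (H : ∀ F : Finset (Set.Iio lam), ∃ γ, ∃ hγl : γ ≤ lam,
      (∀ i ∈ F, i.1 < γ) ∧ res hγl z ∈ closure (res (hγl.trans hlam) '' A)) :
    z ∈ closure (res (X := X) hlam '' A) := by
  rw [mem_closure_iff]
  intro U hU hzU
  obtain ⟨I, u, hu, hsub⟩ := isOpen_pi_iff.mp hU z hzU
  obtain ⟨γ, hγl, hF, hcl⟩ := H I
  classical
  set emb : Set.Iio γ → Set.Iio lam :=
    fun a => ⟨a.1, Set.mem_Iio.mpr (lt_of_lt_of_le (Set.mem_Iio.mp a.2) hγl)⟩ with hemb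
  set I' : Finset (Set.Iio γ) :=
    I.attach.image (fun i => (⟨i.1.1, Set.mem_Iio.mpr (hF i.1 i.2)⟩ : Set.Iio γ)) with hI'
  have memI' : ∀ a ∈ I', emb a ∈ I := by
    intro a ha
    rw [hI', Finset.mem_image] at ha
    obtain ⟨j, _, rfl⟩ := ha
    exact j.2
  set u' : ∀ a : Set.Iio γ, Set (X a.1) := fun a => u (emb a) with hu'
  have hV : IsOpen ((I' : Set (Set.Iio γ)).pi u') :=
    isOpen_set_pi I'.finite_toSet fun a ha => (hu (emb a) (memI' a ha)).1
  have hzV : res hγl z ∈ (I' : Set (Set.Iio γ)).pi u' :=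
    fun a ha => (hu (emb a) (memI' a ha)).2
  obtain ⟨x, hxV, b, hbA, rfl⟩ := (mem_closure_iff.mp hcl) _ hV hzV
  refine ⟨res hlam b, hsub ?_, ⟨b, hbA, rfl⟩⟩
  intro i hi
  have hiI' : (⟨i.1, Set.mem_Iio.mpr (hF i hi)⟩ : Set.Iio γ) ∈ I' := by
    rw [hI', Finset.mem_image]
    exact ⟨⟨i, hi⟩, Finset.mem_attach _ _, rfl⟩
  exact hxV _ hiI'


structure Part {X : Ordinal → Type*} [∀ α, TopologicalSpace (X α)] (κ β : Ordinal)
    (A : Set (∀ a : Set.Iio κ, X a.1)) (y : ∀ a : Set.Iio β, X a.1) where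
  γ : Ordinal
  hβγ : β ≤ γ
  hγκ : γ ≤ κ
  z : ∀ a : Set.Iio γ, X a.1
  hy : res hβγ z = y
  hz : z ∈ closure (res hγκ '' A)

variable {κ β : Ordinal} {A : Set (∀ a : Set.Iio κ, X a.1)} {y : ∀ a : Set.Iio β, X a.1}

def Rel (p q : Part κ β A y) : Prop := ∃ h : p.γ ≤ q.γ, res h q.z = p.z

theorem Rel.trans' {p q r : Part κ β A y} (h1 : Rel p q) (h2 : Rel q r) : Rel p r := by
  obtain ⟨hpq, e1⟩ := h1
  obtain ⟨hqr, e2⟩ := h2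
  exact ⟨hpq.trans hqr, by rw [← res_res hpq hqr, e2, e1]⟩

theorem key {κ : Ordinal} (hκ : Order.IsSuccLimit κ)
    (h : ∀ β : Ordinal, 0 < β → β < κ →
      IsClosedMap (X := ∀ α : Set.Iic β, X α.1) (Y := ∀ a : Set.Iio β, X a.1)
        (fun f a => f ⟨a.1, Set.mem_Iic.mpr (Set.mem_Iio.mp a.2).le⟩))
    {β : Ordinal} (hβ : β < κ) (A : Set (∀ a : Set.Iio κ, X a.1)) (hA : IsClosed A)
    (y : ∀ a : Set.Iio β, X a.1) (hy : y ∈ closure (res (X := X) hβ.le '' A)) :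
    y ∈ res (X := X) hβ.le '' A := by
  classical
  -- Zorn's lemma on partial extensions
  have chains : ∀ c : Set (Part κ β A y), IsChain Rel c → ∃ ub, ∀ a ∈ c, Rel a ub := by
    intro c hc
    rcases c.eq_empty_or_nonempty with rfl | hne
    · exact ⟨⟨β, le_rfl, hβ.le, y, res_rfl y, hy⟩, by simp⟩
    have hbdd : BddAbove (Part.γ '' c) := ⟨κ, by rintro _ ⟨p, _, rfl⟩; exact p.hγκ⟩
    set lam := sSup (Part.γ '' c) with hlamdef
    have hlamκ : lam ≤ κ := csSup_le (hne.image _) (by rintro _ ⟨p, _, rfl⟩; exact p.hγκ)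
    have pick : ∀ a : Set.Iio lam, ∃ p, p ∈ c ∧ a.1 < p.γ := by
      intro a
      obtain ⟨_, ⟨p, hp, rfl⟩, hab⟩ :=
        exists_lt_of_lt_csSup (hne.image Part.γ) (Set.mem_Iio.mp a.2)
      exact ⟨p, hp, hab⟩
    choose P hPc hPγ using pick
    have coh : ∀ p ∈ c, ∀ q ∈ c, ∀ (o : Ordinal) (hop : o < p.γ) (hoq : o < q.γ),
        p.z ⟨o, Set.mem_Iio.mpr hop⟩ = q.z ⟨o, Set.mem_Iio.mpr hoq⟩ := by
      intro p hp q hq o hop hoq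
      rcases eq_or_ne p q with rfl | hpq
      · rfl
      rcases hc hp hq hpq with ⟨hle, e⟩ | ⟨hle, e⟩
      · exact (congrFun e ⟨o, Set.mem_Iio.mpr hop⟩).symm
      · exact congrFun e ⟨o, Set.mem_Iio.mpr hoq⟩
    set zs : ∀ a : Set.Iio lam, X a.1 :=
      fun a => (P a).z ⟨a.1, Set.mem_Iio.mpr (hPγ a)⟩ with hzs
    have hple : ∀ p ∈ c, p.γ ≤ lam := fun p hp => le_csSup hbdd ⟨p, hp, rfl⟩
    have hres : ∀ p (hp : p ∈ c), res (hple p hp) zs = p.z := by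
      intro p hp
      funext a
      exact coh _ (hPc _) p hp a.1 (hPγ _) (Set.mem_Iio.mp a.2)
    obtain ⟨q, hq⟩ := hne
    have hβlam : β ≤ lam := q.hβγ.trans (hple q hq)
    have hys : res hβlam zs = y := by
      have : res hβlam zs = res q.hβγ (res (hple q hq) zs) := rfl
      rw [this, hres q hq, q.hy]
    have hzsmem : zs ∈ closure (res (X := X) hlamκ '' A) := by
      refine mem_closure_res hlamκ A zs ?_
      intro F
      have : ∃ p ∈ c, ∀ i ∈ F, i.1 < p.γ := by
        induction F using Finset.induction with
        | empty => exact ⟨q, hq, by simp⟩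
        | @insert x F hx ih =>
          obtain ⟨p, hp, hpF⟩ := ih
          rcases eq_or_ne p (P x) with e | hne'
          · refine ⟨P x, hPc x, ?_⟩
            intro i hi
            rcases Finset.mem_insert.mp hi with rfl | hiF
            · exact hPγ i
            · exact e ▸ hpF i hiF
          rcases hc hp (hPc x) hne' with ⟨hle, _⟩ | ⟨hle, _⟩
          · refine ⟨P x, hPc x, ?_⟩
            intro i hi
            rcases Finset.mem_insert.mp hi with rfl | hiF
            · exact hPγ i
            · exact lt_of_lt_of_le (hpF i hiF) hle
          · refine ⟨p, hp, ?_⟩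
            intro i hi
            rcases Finset.mem_insert.mp hi with rfl | hiF
            · exact lt_of_lt_of_le (hPγ i) hle
            · exact hpF i hiF
      obtain ⟨p, hp, hpF⟩ := this
      refine ⟨p.γ, hple p hp, hpF, ?_⟩
      rw [hres p hp]
      exact p.hz
    refine ⟨⟨lam, hβlam, hlamκ, zs, hys, hzsmem⟩, ?_⟩
    intro p hp
    exact ⟨hple p hp, hres p hp⟩
  obtain ⟨m, hm⟩ := exists_maximal_of_chains_bounded chains (fun {a b c} => Rel.trans')
  -- the maximal element has γ = κ
  obtain ⟨γm, hβγ, hγκ, z, hzy, hz⟩ := m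
  have hγeq : γm = κ := by
    by_contra hne
    have hlt : γm < κ := lt_of_le_of_ne hγκ hne
    have hsucc : γm ≤ γm + 1 := le_of_lt (Order.lt_add_one_iff.mpr (le_refl γm))
    have hγ1κ : γm + 1 ≤ κ := by
      have := hκ.succ_lt hlt
      rw [Ordinal.add_one_eq_succ]
      exact this.le
    have hcl := res_succ_closed h γm hlt
    have h1 : IsClosed (res hsucc '' closure (res (X := X) hγ1κ '' A)) :=
      hcl _ isClosed_closure
    have h2 : res (X := X) hγκ '' A ⊆ res hsucc '' closure (res hγ1κ '' A) := by
      rintro _ ⟨b, hb, rfl⟩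
      exact ⟨res hγ1κ b, subset_closure ⟨b, hb, rfl⟩, rfl⟩
    obtain ⟨z', hz'C, hz'r⟩ := closure_minimal h2 h1 hz
    have hq : Rel (⟨γm, hβγ, hγκ, z, hzy, hz⟩ : Part κ β A y)
        ⟨γm + 1, hβγ.trans hsucc, hγ1κ, z', by rw [← res_res hβγ hsucc, hz'r, hzy], hz'C⟩ :=
      ⟨hsucc, hz'r⟩
    have := (hm _ hq).choose
    exact absurd this (not_le.mpr (Order.lt_add_one_iff.mpr (le_refl γm)))
  subst hγeq
  have himg : res (X := X) hγκ '' A = A := by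
    rw [show res (X := X) hγκ = id from rfl, Set.image_id]
  rw [himg, hA.closure_eq] at hz
  exact ⟨z, hz, hzy⟩

end Stmt4Aux

theorem stmt_4 (κ : Ordinal) (hκ : Order.IsSuccLimit κ) (X : Ordinal → Type*)
    [∀ α, TopologicalSpace (X α)]
    (h : ∀ β : Ordinal, 0 < β → β < κ →
      IsClosedMap (X := ∀ α : Set.Iic β, X α.1) (Y := ∀ a : Set.Iio β, X a.1)
        (fun f a => f ⟨a.1, Set.mem_Iic.mpr (Set.mem_Iio.mp a.2).le⟩)) :
    ∀ β : Ordinal, ∀ hβ : β < κ,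
      IsClosedMap (X := ∀ α : Set.Iio κ, X α.1) (Y := ∀ a : Set.Iio β, X a.1)
        (fun f a => f ⟨a.1, a.2.trans hβ⟩) := by
  intro β hβ A hA
  have : (fun (f : ∀ α : Set.Iio κ, X α.1) (a : Set.Iio β) => f ⟨a.1, a.2.trans hβ⟩) =
      Stmt4Aux.res hβ.le := rfl
  rw [this]
  exact isClosed_of_closure_subset fun y hy => Stmt4Aux.key hκ h hβ A hA y hy
end

section
/- Let R be a class of topological spaces and let P = {X : for every Y ∈ R, the projection X × Y → Y is closed}, Q = P ∩ R. If X ∈ P and Y ∈ Q, then X × Y ∈ P. -/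
theorem stmt_7 (R : Set TopCat.{u})
    (hR : ∀ Y Z : TopCat.{u}, Y ∈ R → Z ∈ R → TopCat.of (↑Y × ↑Z) ∈ R)
    (X Y : TopCat.{u})
    (hX : ∀ Z ∈ R, IsClosedMap (Prod.snd : ↑X × ↑Z → ↑Z))
    (hYP : ∀ Z ∈ R, IsClosedMap (Prod.snd : ↑Y × ↑Z → ↑Z)) (hYR : Y ∈ R) :
    ∀ Z ∈ R, IsClosedMap (Prod.snd : (↑X × ↑Y) × ↑Z → ↑Z) := by
  intro Z hZ
  have h1 := hX (TopCat.of (↑Y × ↑Z)) (hR Y Z hYR hZ)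
  have h2 := hYP Z hZ
  exact h2.comp (h1.comp (Homeomorph.prodAssoc ↑X ↑Y ↑Z).isClosedMap)
end

section
/- Let κ be an infinite cardinal, R a class of topological spaces closed under products of fewer than κ factors, P = {X : for each Y ∈ R the projection X × Y → Y is closed}, and Q = P ∩ R. If X = ∏_{α∈A} X_α with each X_α ∈ Q and |A| < κ, then X ∈ Q. -/
universe u

namespace Stmt9Aux

open Set

variable {A : Type u}

/-- maximum of a nonempty finset w.r.t. the well-ordering relation -/
theorem finset_max (t : Finset A) (ht : t.Nonempty) :
    ∃ b ∈ t, ∀ c ∈ t, c = b ∨ WellOrderingRel c b := by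
  classical
  induction t using Finset.induction_on with
  | empty => exact absurd ht Finset.not_nonempty_empty
  | @insert a s ha IH =>
    by_cases hs : s.Nonempty
    · obtain ⟨b, hbt, hmax⟩ := IH hs
      rcases trichotomous_of WellOrderingRel a b with hab | hab | hab
      · exact ⟨b, Finset.mem_insert_of_mem hbt, fun c hc =>
          (Finset.mem_insert.1 hc).elim (fun h => Or.inr (h ▸ hab)) (hmax c)⟩
      · exact ⟨b, Finset.mem_insert_of_mem hbt, fun c hc =>
          (Finset.mem_insert.1 hc).elim (fun h => Or.inl (h.trans hab)) (hmax c)⟩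
      · refine ⟨a, Finset.mem_insert_self a s, fun c hc => ?_⟩
        rcases Finset.mem_insert.1 hc with h | h
        · exact Or.inl h
        · rcases hmax c h with rfl | h'
          · exact Or.inr hab
          · exact Or.inr (_root_.trans h' hab)
    · rw [Finset.not_nonempty_iff_eq_empty] at hs
      subst hs
      exact ⟨a, Finset.mem_insert_self a _, fun c hc => Or.inl (by simpa using hc)⟩

noncomputable section

variable (X : A → TopCat.{u}) (Z : TopCat.{u})

def idx (a : A) : Type u := {b // WellOrderingRel b a} ⊕ PUnit.{u+1}

def fam (a : A) : idx a → TopCat.{u} := Sum.elim (fun b => X b.1) (fun _ => Z)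

abbrev Wt (a : A) : Type u := ∀ i, ↑(fam X Z a i)

def phi (a : A) (p : (∀ b, ↑(X b)) × ↑Z) : ↑(X a) × Wt X Z a :=
  (p.1 a, fun i => Sum.rec (fun b => p.1 b.1) (fun _ => p.2) i)

theorem continuous_phi (a : A) : Continuous (phi X Z a) := by
  unfold phi
  refine Continuous.prodMk ((continuous_apply a).comp continuous_fst)
    (continuous_pi fun i => ?_)
  cases i with
  | inl b => exact (continuous_apply b.1).comp continuous_fst
  | inr u => exact continuous_snd

def wpt (z : ↑Z) (a : A) (prev : ∀ b, WellOrderingRel b a → ↑(X b)) : Wt X Z a :=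
  fun i => Sum.rec (fun b => prev b.1 b.2) (fun _ => z) i

variable [∀ b, Nonempty ↑(X b)]

open Classical in
def step (C : Set ((∀ b, ↑(X b)) × ↑Z)) (z : ↑Z) (a : A)
    (prev : ∀ b, WellOrderingRel b a → ↑(X b)) : ↑(X a) :=
  if h : ∃ v : ↑(X a), (v, wpt X Z z a prev) ∈ closure (phi X Z a '' C) then h.choose
  else Classical.arbitrary _

theorem step_mem (C : Set ((∀ b, ↑(X b)) × ↑Z)) (z : ↑Z) (a : A)
    (prev : ∀ b, WellOrderingRel b a → ↑(X b))
    (h : ∃ v : ↑(X a), (v, wpt X Z z a prev) ∈ closure (phi X Z a '' C)) :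
    (step X Z C z a prev, wpt X Z z a prev) ∈ closure (phi X Z a '' C) := by
  unfold step
  rw [dif_pos h]
  exact h.choose_spec

def gfun (C : Set ((∀ b, ↑(X b)) × ↑Z)) (z : ↑Z) : ∀ a, ↑(X a) :=
  (IsWellFounded.wf (r := WellOrderingRel (α := A))).fix (step X Z C z)

theorem gfun_eq (C : Set ((∀ b, ↑(X b)) × ↑Z)) (z : ↑Z) (a : A) :
    gfun X Z C z a = step X Z C z a (fun b _ => gfun X Z C z b) :=
  WellFounded.fix_eq _ _ _

theorem gfun_mem (C : Set ((∀ b, ↑(X b)) × ↑Z)) (z : ↑Z) (a : A)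
    (h : ∃ v : ↑(X a), (v, wpt X Z z a fun b _ => gfun X Z C z b) ∈
      closure (phi X Z a '' C)) :
    (gfun X Z C z a, wpt X Z z a fun b _ => gfun X Z C z b) ∈
      closure (phi X Z a '' C) := by
  rw [gfun_eq]
  exact step_mem X Z C z a _ h

def cyl (C : Set ((∀ b, ↑(X b)) × ↑Z)) (s : Set A) : Set ((∀ b, ↑(X b)) × ↑Z) :=
  {p | ∃ q ∈ C, (∀ b ∈ s, q.1 b = p.1 b) ∧ q.2 = p.2}

theorem cyl_mono (C : Set ((∀ b, ↑(X b)) × ↑Z)) {s s' : Set A} (h : s' ⊆ s) :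
    cyl X Z C s ⊆ cyl X Z C s' :=
  fun _ ⟨q, hq, hag, h2⟩ => ⟨q, hq, fun b hb => hag b (h hb), h2⟩

end

end Stmt9Aux

theorem stmt_9 (κ : Cardinal.{u}) (hκ : Cardinal.aleph0 ≤ κ) (R : Set TopCat.{u})
    (hR : ∀ (ι : Type u) (Y : ι → TopCat.{u}), Cardinal.mk ι < κ →
      (∀ i, Y i ∈ R) → TopCat.of (∀ i, ↑(Y i)) ∈ R)
    (A : Type u) (X : A → TopCat.{u})
    (hXP : ∀ a, ∀ Z ∈ R, IsClosedMap (Prod.snd : ↑(X a) × ↑Z → ↑Z))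
    (hXR : ∀ a, X a ∈ R) (hA : Cardinal.mk A < κ) :
    (∀ Z ∈ R, IsClosedMap (Prod.snd : (∀ a, ↑(X a)) × ↑Z → ↑Z)) ∧
      TopCat.of (∀ a, ↑(X a)) ∈ R := by
  classical
  open Stmt9Aux Set in
  refine ⟨?_, hR A X hA hXR⟩
  intro Z hZ
  by_cases hne : ∀ b : A, Nonempty ↑(X b)
  swap
  · push_neg at hne
    obtain ⟨a, ha⟩ := hne
    intro C hC
    have hCe : C = ∅ := Set.eq_empty_of_forall_notMem fun p _ => ha.false (p.1 a)
    simp [hCe]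
  haveI := hne
  intro C hC
  refine isClosed_of_closure_subset fun z hz => ?_
  -- the recursively chosen point
  obtain ⟨g, hgkey⟩ : ∃ g : ∀ b, ↑(X b), ∀ a : A,
      (∃ v : ↑(X a), (v, wpt X Z z a fun b _ => g b) ∈ closure (phi X Z a '' C)) →
      (g a, wpt X Z z a fun b _ => g b) ∈ closure (phi X Z a '' C) :=
    ⟨gfun X Z C z, fun a h => gfun_mem X Z C z a h⟩
  -- membership of the auxiliary product spaces in R
  have hWmem : ∀ a : A, TopCat.of (Wt X Z a) ∈ R := by
    intro a
    refine hR (idx a) (fam X Z a) ?_ ?_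
    · have h1 : Cardinal.mk (idx a) ≤ Cardinal.mk A + 1 := by
        have : Cardinal.mk (idx a) =
            Cardinal.mk {b // WellOrderingRel b a} + Cardinal.mk PUnit.{u+1} := by
          simpa [idx] using (Cardinal.mk_sum {b // WellOrderingRel b a} PUnit.{u+1})
        rw [this, Cardinal.mk_punit]
        exact add_le_add (Cardinal.mk_subtype_le _) (le_refl 1)
      exact lt_of_le_of_lt h1
        (Cardinal.add_lt_of_lt hκ hA (lt_of_lt_of_le Cardinal.one_lt_aleph0 hκ))
    · intro i
      cases i with
      | inl b => exact hXR b.1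
      | inr u => exact hZ
  have hclosedW : ∀ a : A,
      IsClosedMap (Prod.snd : ↑(X a) × Wt X Z a → Wt X Z a) := fun a =>
    hXP a (TopCat.of (Wt X Z a)) (hWmem a)
  -- base: the empty cylinder
  have hbase : (g, z) ∈ closure (cyl X Z C ∅) := by
    rw [mem_closure_iff_nhds]
    intro U hU
    rw [nhds_prod_eq] at hU
    obtain ⟨u, hu, v, hv, huv⟩ := Filter.mem_prod_iff.1 hU
    obtain ⟨z', hz'v, q, hqC, hq2⟩ := mem_closure_iff_nhds.1 hz v hv
    refine ⟨(g, q.2), huv ⟨mem_of_mem_nhds hu, ?_⟩, q, hqC,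
      fun b hb => absurd hb (Set.notMem_empty b), rfl⟩
    show q.2 ∈ v
    rwa [hq2]
  -- finite support lemma
  have hfin : ∀ s : Set A,
      (∀ t : Finset A, ↑t ⊆ s → (g, z) ∈ closure (cyl X Z C ↑t)) →
      (g, z) ∈ closure (cyl X Z C s) := by
    intro s hts
    rw [mem_closure_iff_nhds]
    intro U hU
    rw [nhds_prod_eq] at hU
    obtain ⟨u, hu, v, hv, huv⟩ := Filter.mem_prod_iff.1 hU
    rw [nhds_pi] at hu
    obtain ⟨I, t, ht, hIt⟩ := Filter.mem_pi'.1 hu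
    have hmem : ((↑I : Set A).pi t) ×ˢ v ∈ nhds (g, z) := by
      rw [nhds_prod_eq]
      exact Filter.prod_mem_prod (set_pi_mem_nhds I.finite_toSet fun b _ => ht b) hv
    obtain ⟨p, ⟨hp1, hp2⟩, q, hqC, hag, h2⟩ :=
      mem_closure_iff_nhds.1 (hts (I.filter (· ∈ s)) (by
        intro b hb
        simpa using (Finset.mem_filter.1 hb).2)) _ hmem
    refine ⟨(fun b => if b ∈ s then q.1 b else p.1 b, p.2),
      huv ⟨hIt ?_, hp2⟩, q, hqC, fun b hb => (if_pos hb).symm, h2⟩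
    intro b hb
    show (if b ∈ s then q.1 b else p.1 b) ∈ t b
    by_cases hbs : b ∈ s
    · rw [if_pos hbs, hag b (by simpa using Finset.mem_filter.2 ⟨hb, hbs⟩)]
      exact hp1 b hb
    · rw [if_neg hbs]
      exact hp1 b hb
  -- successor step
  have hstep : ∀ a : A, (g, z) ∈ closure (cyl X Z C {b | WellOrderingRel b a}) →
      (g, z) ∈ closure (cyl X Z C (insert a {b | WellOrderingRel b a})) := by
    intro a hseg
    set wst : Wt X Z a := wpt X Z z a fun b _ => g b with hwst
    have hψ : Continuous fun p : (∀ b, ↑(X b)) × ↑Z => (phi X Z a p).2 :=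
      continuous_snd.comp (continuous_phi X Z a)
    have hex : ∃ v : ↑(X a), (v, wst) ∈ closure (phi X Z a '' C) := by
      have h3 : (fun p => (phi X Z a p).2) (g, z) ∈
          closure ((fun p => (phi X Z a p).2) '' cyl X Z C {b | WellOrderingRel b a}) :=
        image_closure_subset_closure_image hψ ⟨(g, z), hseg, rfl⟩
      have h1 : (fun p => (phi X Z a p).2) (g, z) ∈
          closure ((fun p => (phi X Z a p).2) '' C) := by
        refine closure_mono ?_ h3
        rintro _ ⟨p, ⟨q, hqC, hag, h2'⟩, rfl⟩
        refine ⟨q, hqC, ?_⟩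
        funext i
        cases i with
        | inl b => exact hag b.1 b.2
        | inr u => exact h2'
      have hcl : IsClosed (Prod.snd '' closure (phi X Z a '' C)) :=
        hclosedW a _ isClosed_closure
      have h4 : closure ((fun p => (phi X Z a p).2) '' C) ⊆
          Prod.snd '' closure (phi X Z a '' C) := by
        refine closure_minimal ?_ hcl
        rintro _ ⟨p, hp, rfl⟩
        exact ⟨phi X Z a p, subset_closure ⟨p, hp, rfl⟩, rfl⟩
      obtain ⟨pr, hprD, hpr2⟩ := h4 h1
      refine ⟨pr.1, ?_⟩
      have hw : (fun p => (phi X Z a p).2) (g, z) = wst := by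
        funext i
        cases i <;> rfl
      rw [← hw, ← hpr2]
      exact hprD
    have hga : (g a, wst) ∈ closure (phi X Z a '' C) := hgkey a hex
    rw [mem_closure_iff_nhds]
    intro U hU
    rw [nhds_prod_eq] at hU
    obtain ⟨u, hu, v, hv, huv⟩ := Filter.mem_prod_iff.1 hU
    rw [nhds_pi] at hu
    obtain ⟨I, t, ht, hIt⟩ := Filter.mem_pi'.1 hu
    -- a neighborhood of (g a, wst)
    set SS : Set (idx a) :=
      (Sum.inl '' {b : {b // WellOrderingRel b a} | b.1 ∈ I}) ∪ {Sum.inr PUnit.unit}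
      with hSS
    have hSSfin : SS.Finite := by
      refine Set.Finite.union (Set.Finite.image _ ?_) (Set.finite_singleton _)
      exact Set.Finite.preimage Subtype.val_injective.injOn I.finite_toSet
    set CC : ∀ i : idx a, Set ↑(fam X Z a i) :=
      fun i => Sum.rec (fun b => t b.1) (fun _ => v) i with hCC
    have hN : (t a) ×ˢ (SS.pi CC) ∈ nhds (g a, wst) := by
      rw [nhds_prod_eq]
      refine Filter.prod_mem_prod (ht a) (set_pi_mem_nhds hSSfin ?_)
      rintro i (⟨b, hbI, rfl⟩ | hi)
      · exact ht b.1
      · replace hi : i = Sum.inr PUnit.unit := hi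
        subst hi
        exact hv
    obtain ⟨pr, ⟨hpr1, hpr2⟩, p0, hp0C, hphieq⟩ := mem_closure_iff_nhds.1 hga _ hN
    subst hphieq
    refine ⟨(fun b => if b = a ∨ WellOrderingRel b a then p0.1 b else g b, p0.2),
      huv ⟨hIt ?_, ?_⟩, p0, hp0C, ?_, rfl⟩
    · intro b hbI
      show (if b = a ∨ WellOrderingRel b a then p0.1 b else g b) ∈ t b
      by_cases hc : b = a ∨ WellOrderingRel b a
      · rw [if_pos hc]
        rcases hc with rfl | hba
        · exact hpr1
        · exact hpr2 (Sum.inl ⟨b, hba⟩) (Or.inl ⟨⟨b, hba⟩, hbI, rfl⟩)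
      · rw [if_neg hc]
        exact mem_of_mem_nhds (ht b)
    · exact hpr2 (Sum.inr PUnit.unit) (Or.inr rfl)
    · intro b hb
      exact (if_pos (Set.mem_insert_iff.1 hb)).symm
  -- main transfinite induction
  have hind : ∀ a : A, (g, z) ∈ closure (cyl X Z C (insert a {b | WellOrderingRel b a})) := by
    intro a
    refine (IsWellFounded.wf (r := WellOrderingRel (α := A))).induction
      (C := fun a => (g, z) ∈ closure (cyl X Z C (insert a {b | WellOrderingRel b a}))) a ?_
    intro x IH
    refine hstep x (hfin _ fun tf hts => ?_)
    by_cases hne' : tf.Nonempty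
    · obtain ⟨b, hbt, hmax⟩ := finset_max tf hne'
      refine closure_mono (cyl_mono X Z C ?_) (IH b (hts hbt))
      intro c hc
      rcases hmax c hc with rfl | h
      · exact Set.mem_insert _ _
      · exact Set.mem_insert_iff.2 (Or.inr h)
    · rw [Finset.not_nonempty_iff_eq_empty] at hne'
      subst hne'
      simpa using hbase
  -- conclude
  have huniv : (g, z) ∈ closure (cyl X Z C Set.univ) := by
    refine hfin Set.univ fun tf _ => ?_
    by_cases hne' : tf.Nonempty
    · obtain ⟨b, hbt, hmax⟩ := finset_max tf hne'
      refine closure_mono (cyl_mono X Z C ?_) (hind b)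
      intro c hc
      rcases hmax c hc with rfl | h
      · exact Set.mem_insert _ _
      · exact Set.mem_insert_iff.2 (Or.inr h)
    · rw [Finset.not_nonempty_iff_eq_empty] at hne'
      subst hne'
      simpa using hbase
  have hsubC : cyl X Z C Set.univ ⊆ C := by
    rintro p ⟨q, hqC, hag, h2⟩
    have : q = p := Prod.ext (funext fun b => hag b (Set.mem_univ b)) h2
    rwa [← this]
  have hgC : (g, z) ∈ C := closure_minimal hsubC hC huniv
  exact ⟨(g, z), hgC, rfl⟩
end

section
/- Let κ be an infinite cardinal, R a class of topological spaces closed under products of fewer than κ factors, P = {X : for each Y ∈ R the projection X × Y → Y is closed}, and Q = P ∩ R. If X = ∏_{α∈A} X_α with each X_α ∈ Q and |A| = κ, then X ∈ P. -/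
universe u

open Cardinal Set Topology

namespace Stmt10Aux

variable {A : Type u} (X : A → TopCat.{u}) (Z : TopCat.{u})

/-- The family of spaces indexed by `Option s`: `none ↦ Z`, `some b ↦ X b`. -/
def fam (s : Set A) : Option s → TopCat.{u} :=
  fun i => Option.elim i Z (fun b => X b)

/-- The natural map `(∀ a, X a) × Z → ∀ i : Option s, fam i`. -/
def qmap (s : Set A) : ((∀ a, ↑(X a)) × ↑Z) → ∀ i : Option s, ↑(fam X Z s i) :=
  fun c i => match i with
  | none => c.2
  | some b => c.1 b

lemma continuous_qmap (s : Set A) : Continuous (qmap X Z s) := by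
  apply continuous_pi
  intro i
  match i with
  | none => exact continuous_snd
  | some b => exact (continuous_apply (b : A)).comp continuous_fst

/-- The partial point determined by `z` and a partial assignment `x`. -/
def wpt (z : ↑Z) (s : Set A) (x : ∀ b : s, ↑(X b)) : ∀ i : Option s, ↑(fam X Z s i) :=
  fun i => match i with
  | none => z
  | some b => x b

/-- The invariant for Zorn's lemma. -/
def Phi (C : Set ((∀ a, ↑(X a)) × ↑Z)) (z : ↑Z) (r : A → A → Prop)
    (G : Set (Σ a, ↑(X a))) : Prop :=
  (∀ p ∈ G, ∀ q ∈ G, p.1 = q.1 → p = q) ∧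
  (∀ a b : A, r b a → (∃ v, (⟨a, v⟩ : Σ a, ↑(X a)) ∈ G) →
      ∃ v, (⟨b, v⟩ : Σ a, ↑(X a)) ∈ G) ∧
  (∀ V : Set ↑Z, IsOpen V → z ∈ V → ∀ F : Finset (Σ a, Set ↑(X a)),
    (∀ p ∈ F, IsOpen p.2 ∧ ∃ v ∈ p.2, (⟨p.1, v⟩ : Σ a, ↑(X a)) ∈ G) →
    ∃ c ∈ C, c.2 ∈ V ∧ ∀ p ∈ F, c.1 p.1 ∈ p.2)

variable {X Z}

/-- Lemma A : from the invariant we get membership in the closure of the projection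
of `C` to the subproduct indexed by `Option s`. -/
lemma phi_mem_closure {C : Set ((∀ a, ↑(X a)) × ↑Z)} {z : ↑Z} {r : A → A → Prop}
    {G : Set (Σ a, ↑(X a))} (hG : Phi X Z C z r G) (s : Set A)
    (x : ∀ b : s, ↑(X b)) (hx : ∀ b : s, (⟨(b : A), x b⟩ : Σ a, ↑(X a)) ∈ G) :
    wpt X Z z s x ∈ closure (qmap X Z s '' C) := by
  classical
  rw [mem_closure_iff]
  intro U hU hwU
  obtain ⟨I, u, hIu, hIsub⟩ := isOpen_pi_iff.mp hU _ hwU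
  -- the open set in `Z`
  set V : Set ↑Z := {v : ↑Z | none ∈ I → v ∈ u none} with hV
  have hVopen : IsOpen V := by
    by_cases h : none ∈ I
    · have : V = u none := by ext v; simp [hV, h]; exact Iff.rfl
      rw [this]; exact (hIu none h).1
    · have : V = Set.univ := by ext v; simp [hV, h]
      rw [this]; exact isOpen_univ
  have hzV : z ∈ V := fun h => (hIu none h).2
  -- the finite family of constraints
  set F : Finset (Σ a, Set ↑(X a)) :=
    (I.eraseNone).image (fun b : s => (⟨(b : A), u (some b)⟩ : Σ a, Set ↑(X a))) with hF
  have hFcond : ∀ p ∈ F, IsOpen p.2 ∧ ∃ v ∈ p.2, (⟨p.1, v⟩ : Σ a, ↑(X a)) ∈ G := by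
    intro p hp
    rw [hF] at hp
    obtain ⟨b, hb, rfl⟩ := Finset.mem_image.mp hp
    have hbI : some b ∈ I := Finset.mem_eraseNone.1 hb
    exact ⟨(hIu (some b) hbI).1, x b, (hIu (some b) hbI).2, hx b⟩
  obtain ⟨c, hcC, hcV, hcF⟩ := hG.2.2 V hVopen hzV F hFcond
  refine ⟨qmap X Z s c, ⟨?_, mem_image_of_mem _ hcC⟩⟩
  apply hIsub
  intro i hi
  cases i with
  | none => exact hcV hi
  | some b =>
    have hbF : (⟨(b : A), u (some b)⟩ : Σ a, Set ↑(X a)) ∈ F := by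
      rw [hF]; exact Finset.mem_image_of_mem _ (Finset.mem_eraseNone.2 hi)
    exact hcF _ hbF

/-- Lemma B : extending the invariant by one more coordinate, given a point in the closure. -/
lemma phi_insert {C : Set ((∀ a, ↑(X a)) × ↑Z)} {z : ↑Z} {r : A → A → Prop}
    {G : Set (Σ a, ↑(X a))} (hG : Phi X Z C z r G) (s : Set A)
    (x : ∀ b : s, ↑(X b)) (hx : ∀ b : s, (⟨(b : A), x b⟩ : Σ a, ↑(X a)) ∈ G)
    (hdom : ∀ a : A, (∃ v, (⟨a, v⟩ : Σ a, ↑(X a)) ∈ G) → a ∈ s)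
    (a : A) (ha : a ∉ s) (hlow : ∀ b, r b a → b ∈ s)
    (t : ↑(X a))
    (ht : (t, wpt X Z z s x) ∈
      closure ((fun c => (c.1 a, qmap X Z s c)) '' C)) :
    Phi X Z C z r (insert ⟨a, t⟩ G) := by
  classical
  refine ⟨?_, ?_, ?_⟩
  · -- functionality
    rintro p hp q hq h
    rcases Set.mem_insert_iff.1 hp with rfl | hp' <;>
      rcases Set.mem_insert_iff.1 hq with rfl | hq'
    · rfl
    · exact absurd (hdom q.1 ⟨q.2, hq'⟩) (h ▸ ha)
    · exact absurd (hdom p.1 ⟨p.2, hp'⟩) (h.symm ▸ ha)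
    · exact hG.1 p hp' q hq' h
  · -- lower set
    rintro a' b hr ⟨v, hv⟩
    rcases Set.mem_insert_iff.1 hv with he | hv'
    · have h1 : a' = a := congrArg Sigma.fst he
      exact ⟨x ⟨b, hlow b (h1 ▸ hr)⟩,
        Set.mem_insert_of_mem _ (hx ⟨b, hlow b (h1 ▸ hr)⟩)⟩
    · obtain ⟨w, hw⟩ := hG.2.1 a' b hr ⟨v, hv'⟩
      exact ⟨w, Set.mem_insert_of_mem _ hw⟩
  · -- the closure condition
    intro V hVopen hzV F hF
    -- the open set in `X a`
    set U : Set ↑(X a) := {v : ↑(X a) | ∀ p ∈ F, ∀ h : p.1 = a, v ∈ (h ▸ p.2 : Set ↑(X a))}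
      with hU
    have hUopen : IsOpen U := by
      have : U = ⋂ p ∈ F, ⋂ h : p.1 = a, (h ▸ p.2 : Set ↑(X a)) := by
        ext v; simp [hU, mem_iInter]
      rw [this]
      refine isOpen_biInter_finset fun p hp => isOpen_iInter_of_finite fun h => ?_
      subst h
      exact (hF p hp).1
    have htU : t ∈ U := by
      intro p hp h
      obtain ⟨v, hv, hins⟩ := (hF p hp).2
      rcases Set.mem_insert_iff.1 hins with he | hmem
      · subst h
        have hvt : v = t := eq_of_heq (Sigma.mk.inj_iff.1 he).2
        rwa [hvt] at hv
      · exact absurd (hdom p.1 ⟨v, hmem⟩) (h.symm ▸ ha)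
    -- the open set in the subproduct
    set O : Set (∀ i : Option s, ↑(fam X Z s i)) :=
      {w | w none ∈ V ∧ ∀ p ∈ F, ∀ h : p.1 ∈ s, w (some ⟨p.1, h⟩) ∈ p.2} with hO
    have hOopen : IsOpen O := by
      have : O = ((fun w : ∀ i : Option s, ↑(fam X Z s i) => w none) ⁻¹' V) ∩
          ⋂ p ∈ F, ⋂ h : p.1 ∈ s,
            ((fun w : ∀ i : Option s, ↑(fam X Z s i) => w (some ⟨p.1, h⟩)) ⁻¹' p.2) := by
        ext w; simp [hO, mem_iInter]; exact Iff.rfl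
      rw [this]
      refine IsOpen.inter (hVopen.preimage (continuous_apply none)) ?_
      refine isOpen_biInter_finset fun p hp => isOpen_iInter_of_finite fun h => ?_
      exact (hF p hp).1.preimage (continuous_apply (some (⟨p.1, h⟩ : ↥s)))
    have hwO : wpt X Z z s x ∈ O := by
      refine ⟨hzV, fun p hp h => ?_⟩
      obtain ⟨v, hv, hins⟩ := (hF p hp).2
      rcases Set.mem_insert_iff.1 hins with he | hmem
      · have h1 : p.1 = a := congrArg Sigma.fst he
        exact absurd (h1 ▸ h) ha
      · have : (⟨p.1, v⟩ : Σ a, ↑(X a)) = ⟨p.1, x ⟨p.1, h⟩⟩ :=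
          hG.1 _ hmem _ (hx ⟨p.1, h⟩) rfl
        have hvx : v = x ⟨p.1, h⟩ := eq_of_heq (Sigma.mk.inj_iff.1 this).2
        show x ⟨p.1, h⟩ ∈ p.2
        rwa [hvx] at hv
    -- meet the closure
    rw [mem_closure_iff] at ht
    obtain ⟨y, ⟨hyU, hyO⟩, c, hcC, hyc⟩ :=
      ht (U ×ˢ O) (hUopen.prod hOopen) ⟨htU, hwO⟩
    subst hyc
    refine ⟨c, hcC, hyO.1, fun p hp => ?_⟩
    by_cases h : p.1 ∈ s
    · exact hyO.2 p hp h
    · -- p.1 must be a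
      obtain ⟨v, hv, hins⟩ := (hF p hp).2
      rcases Set.mem_insert_iff.1 hins with he | hmem
      · have h1 : p.1 = a := congrArg Sigma.fst he
        have := hyU p hp h1
        revert this
        subst h1
        exact fun h' => h'
      · exact absurd (hdom _ ⟨v, hmem⟩) h

/-- Chains: pull a finite family of witnesses into a single member of the chain. -/
lemma chain_finset_exists {c : Set (Set (Σ a, ↑(X a)))}
    (hc : IsChain (· ⊆ ·) c) (hne : c.Nonempty) (F : Finset (Σ a, Set ↑(X a)))
    (h : ∀ p ∈ F, ∃ v ∈ p.2, (⟨p.1, v⟩ : Σ a, ↑(X a)) ∈ ⋃₀ c) :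
    ∃ G ∈ c, ∀ p ∈ F, ∃ v ∈ p.2, (⟨p.1, v⟩ : Σ a, ↑(X a)) ∈ G := by
  classical
  induction F using Finset.induction_on with
  | empty => exact ⟨hne.choose, hne.choose_spec, by simp⟩
  | @insert p F hnotmem ih =>
    obtain ⟨G₁, hG₁, hF₁⟩ := ih (fun q hq => h q (Finset.mem_insert_of_mem hq))
    obtain ⟨v, hv, hv2⟩ := h p (Finset.mem_insert_self p F)
    obtain ⟨G₂, hG₂, hvG₂⟩ := hv2
    rcases eq_or_ne G₁ G₂ with rfl | hne'
    · exact ⟨G₁, hG₁, fun q hq => by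
        rcases Finset.mem_insert.1 hq with rfl | hq
        · exact ⟨v, hv, hvG₂⟩
        · exact hF₁ q hq⟩
    · rcases hc hG₁ hG₂ hne' with hsub | hsub
      · exact ⟨G₂, hG₂, fun q hq => by
          rcases Finset.mem_insert.1 hq with rfl | hq
          · exact ⟨v, hv, hvG₂⟩
          · obtain ⟨w, hw1, hw2⟩ := hF₁ q hq; exact ⟨w, hw1, hsub hw2⟩⟩
      · exact ⟨G₁, hG₁, fun q hq => by
          rcases Finset.mem_insert.1 hq with rfl | hq
          · exact ⟨v, hv, hsub hvG₂⟩
          · exact hF₁ q hq⟩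

end Stmt10Aux

theorem stmt_10 (κ : Cardinal.{u}) (hκ : Cardinal.aleph0 ≤ κ) (R : Set TopCat.{u})
    (hR : ∀ (ι : Type u) (Y : ι → TopCat.{u}), Cardinal.mk ι < κ →
      (∀ i, Y i ∈ R) → TopCat.of (∀ i, ↑(Y i)) ∈ R)
    (A : Type u) (X : A → TopCat.{u})
    (hXP : ∀ a, ∀ Z ∈ R, IsClosedMap (Prod.snd : ↑(X a) × ↑Z → ↑Z))
    (hXR : ∀ a, X a ∈ R) (hA : Cardinal.mk A = κ) :
    ∀ Z ∈ R, IsClosedMap (Prod.snd : (∀ a, ↑(X a)) × ↑Z → ↑Z) := by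
  classical
  intro Z hZ C hC
  apply isClosed_of_closure_subset
  intro z hz
  obtain ⟨r, wo, hord⟩ := Cardinal.ord_eq A
  set S : Set (Set (Σ a, ↑(X a))) := {G | Stmt10Aux.Phi X Z C z r G} with hS
  -- empty set is in S
  have hempty : (∅ : Set (Σ a, ↑(X a))) ∈ S := by
    refine ⟨by simp, by simp, ?_⟩
    intro V hV hzV F hF
    have hFe : F = ∅ := by
      rcases Finset.eq_empty_or_nonempty F with rfl | ⟨p, hp⟩
      · rfl
      · obtain ⟨v, -, hv⟩ := (hF p hp).2; exact absurd hv (by simp)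
    subst hFe
    rw [mem_closure_iff] at hz
    obtain ⟨y, hyV, c, hcC, rfl⟩ := hz V hV hzV
    exact ⟨c, hcC, hyV, by simp⟩
  -- chains
  have hchain : ∀ c ⊆ S, IsChain (· ⊆ ·) c → c.Nonempty → ∃ ub ∈ S, ∀ s ∈ c, s ⊆ ub := by
    intro c hcS hch hcne
    refine ⟨⋃₀ c, ⟨?_, ?_, ?_⟩, fun s hs => subset_sUnion_of_mem hs⟩
    · rintro p ⟨G₁, hG₁, hp⟩ q ⟨G₂, hG₂, hq⟩ h
      rcases eq_or_ne G₁ G₂ with rfl | hne'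
      · exact (hcS hG₁).1 p hp q hq h
      rcases hch hG₁ hG₂ hne' with hsub | hsub
      · exact (hcS hG₂).1 p (hsub hp) q hq h
      · exact (hcS hG₁).1 p hp q (hsub hq) h
    · rintro a b hr ⟨v, G₁, hG₁, hv⟩
      obtain ⟨w, hw⟩ := (hcS hG₁).2.1 a b hr ⟨v, hv⟩
      exact ⟨w, G₁, hG₁, hw⟩
    · intro V hV hzV F hF
      obtain ⟨G₁, hG₁, hF₁⟩ := Stmt10Aux.chain_finset_exists hch hcne F (fun p hp => (hF p hp).2)
      exact (hcS hG₁).2.2 V hV hzV F (fun p hp => ⟨(hF p hp).1, hF₁ p hp⟩)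
  obtain ⟨m, -, hm⟩ := zorn_subset_nonempty S hchain ∅ hempty
  have hmS : Stmt10Aux.Phi X Z C z r m := hm.1
  -- domain of m
  set s : Set A := {a | ∃ v, (⟨a, v⟩ : Σ a, ↑(X a)) ∈ m} with hsdef
  have hxe : ∀ b : s, ∃ v, (⟨(b : A), v⟩ : Σ a, ↑(X a)) ∈ m := fun b => b.2
  choose x hx using hxe
  -- claim: s = univ
  by_cases hsuniv : s = Set.univ
  · -- final step: the full point is in the closure of C, hence in C
    have hmemuniv : ∀ a : A, a ∈ s := fun a => by rw [hsuniv]; exact Set.mem_univ a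
    set f : ∀ a, ↑(X a) := fun a => x ⟨a, hmemuniv a⟩ with hf
    have hmemC : (f, z) ∈ C := by
      rw [← hC.closure_eq]
      rw [mem_closure_iff]
      intro U hU hfzU
      obtain ⟨U₁, V, hU₁, hV, hfU₁, hzV, hsub⟩ := isOpen_prod_iff.mp hU f z hfzU
      obtain ⟨I, u, hIu, hIsub⟩ := isOpen_pi_iff.mp hU₁ f hfU₁
      have hFcond : ∀ p ∈ I.image (fun a => (⟨a, u a⟩ : Σ a, Set ↑(X a))),
          IsOpen p.2 ∧ ∃ v ∈ p.2, (⟨p.1, v⟩ : Σ a, ↑(X a)) ∈ m := by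
        intro p hp
        obtain ⟨a, haI, rfl⟩ := Finset.mem_image.mp hp
        exact ⟨(hIu a haI).1, f a, (hIu a haI).2, hx ⟨a, hmemuniv a⟩⟩
      obtain ⟨c, hcC, hcV, hcF⟩ := hmS.2.2 V hV hzV
        (I.image (fun a => (⟨a, u a⟩ : Σ a, Set ↑(X a)))) hFcond
      refine ⟨c, ?_, hcC⟩
      apply hsub
      refine ⟨hIsub fun a haI => ?_, hcV⟩
      exact hcF ⟨a, u a⟩ (Finset.mem_image_of_mem _ haI)
    exact ⟨(f, z), hmemC, rfl⟩
  · -- extension step: contradiction with maximality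
    exfalso
    haveI : IsWellOrder A r := wo
    have hsc : (sᶜ : Set A).Nonempty := by
      rwa [nonempty_compl]
    set a := wo.wf.min sᶜ hsc with hadef
    have haND : a ∉ s := wo.wf.min_mem sᶜ hsc
    have hamin : ∀ b ∈ sᶜ, ¬ r b a := fun b hb => wo.wf.not_lt_min sᶜ hb
    have hseq : s = {b | r b a} := by
      ext b
      constructor
      · intro hb
        rcases trichotomous_of r b a with h | h | h
        · exact h
        · exact absurd (h ▸ hb) haND
        · exact absurd (hmS.2.1 b a h hb) haND
      · intro hb
        by_contra hbs
        exact hamin b hbs hb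
    have hslt : Cardinal.mk ↥s < κ := by
      rw [hseq]
      have h1 : Cardinal.mk ↥{b | r b a} = (Ordinal.typein r a).card :=
        Ordinal.card_typein a
      rw [h1, ← hA]
      exact Cardinal.card_typein_lt (r := r) a hord
    have hOlt : Cardinal.mk (Option ↥s) < κ := by
      rw [Cardinal.mk_option]
      exact Cardinal.add_lt_of_lt hκ hslt (lt_of_lt_of_le Cardinal.one_lt_aleph0 hκ)
    have hPR : TopCat.of (∀ i : Option ↥s, ↑(Stmt10Aux.fam X Z s i)) ∈ R :=
      hR (Option ↥s) (Stmt10Aux.fam X Z s) hOlt (fun i => by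
        cases i with
        | none => exact hZ
        | some b => exact hXR b)
    have hclosedmap : IsClosedMap
        (Prod.snd : ↑(X a) × (∀ i : Option ↥s, ↑(Stmt10Aux.fam X Z s i)) →
          (∀ i : Option ↥s, ↑(Stmt10Aux.fam X Z s i))) :=
      hXP a _ hPR
    set p : ((∀ a, ↑(X a)) × ↑Z) → ↑(X a) × (∀ i : Option ↥s, ↑(Stmt10Aux.fam X Z s i)) :=
      fun c => (c.1 a, Stmt10Aux.qmap X Z s c) with hpdef
    have hcl : IsClosed (Prod.snd '' closure (p '' C)) := hclosedmap _ isClosed_closure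
    have hsub : Stmt10Aux.qmap X Z s '' C ⊆ Prod.snd '' closure (p '' C) := by
      rintro _ ⟨c, hcC, rfl⟩
      exact ⟨p c, subset_closure ⟨c, hcC, rfl⟩, rfl⟩
    have hwin : Stmt10Aux.wpt X Z z s x ∈ Prod.snd '' closure (p '' C) :=
      (hcl.closure_subset_iff.2 hsub) (Stmt10Aux.phi_mem_closure hmS s x hx)
    obtain ⟨y, hyD, hysnd⟩ := hwin
    have hyt : y = (y.1, Stmt10Aux.wpt X Z z s x) := by
      rw [← hysnd]
    rw [hyt] at hyD
    have hnew : Stmt10Aux.Phi X Z C z r (insert ⟨a, y.1⟩ m) :=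
      Stmt10Aux.phi_insert hmS s x hx (fun a' h => h) a haND
        (fun b hb => by rw [hseq]; exact hb) y.1 hyD
    have hmem : (⟨a, y.1⟩ : Σ a, ↑(X a)) ∈ m :=
      hm.2 hnew (subset_insert _ _) (mem_insert _ _)
    exact haND ⟨y.1, hmem⟩
end

section
/- Let κ be an infinite cardinal, X and Y topological spaces. Suppose X has an open cover {U_α : α < κ} with no subcover of cardinality less than κ, and Y contains an increasing (with respect to the ordinal index) family {H_α : α < κ} of closed sets whose union is not closed. Then the projection π_Y : X × Y → Y is not a closed map. -/
theorem stmt_11 (κ : Cardinal.{v}) (hκ : Cardinal.aleph0 ≤ κ)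
    {X Y : Type*} [TopologicalSpace X] [TopologicalSpace Y]
    (U : Set.Iio κ.ord → Set X) (hUopen : ∀ α, IsOpen (U α))
    (hUcover : ⋃ α, U α = Set.univ)
    (hUno : ∀ s : Set (Set.Iio κ.ord),
      Cardinal.mk s < Cardinal.lift.{v + 1} κ → ⋃ α ∈ s, U α ≠ Set.univ)
    (H : Set.Iio κ.ord → Set Y) (hHclosed : ∀ α, IsClosed (H α))
    (hHmono : Monotone H) (hHunion : ¬ IsClosed (⋃ α, H α)) :
    ¬ IsClosedMap (Prod.snd : X × Y → Y) := by
  intro hclosed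
  -- the witness closed set
  set S : Set (X × Y) :=
    {p | ∃ α : Set.Iio κ.ord, (∀ β : Set.Iio κ.ord, β < α → p.1 ∉ U β) ∧ p.2 ∈ H α} with hS
  -- every "F_α" is nonempty
  have hF : ∀ α : Set.Iio κ.ord, ∃ x : X, ∀ β : Set.Iio κ.ord, β < α → x ∉ U β := by
    intro α
    by_contra hc
    push_neg at hc
    apply hUno {β | β < α}
    · have he : {β : Set.Iio κ.ord | β < α} ≃ Set.Iio α.1 :=
        { toFun := fun β => ⟨β.1.1, β.2⟩
          invFun := fun b => ⟨⟨b.1, Set.mem_Iio.mpr (lt_trans (Set.mem_Iio.mp b.2) (Set.mem_Iio.mp α.2))⟩, Set.mem_Iio.mp b.2⟩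
          left_inv := fun β => rfl
          right_inv := fun b => rfl }
      rw [Cardinal.mk_congr he, Ordinal.mk_Iio_ordinal]
      exact Cardinal.lift_lt.2 (Cardinal.lt_ord.1 (Set.mem_Iio.mp α.2))
    · apply Set.eq_univ_of_forall
      intro x
      obtain ⟨β, hβ, hx⟩ := hc x
      exact Set.mem_biUnion hβ hx
  -- S is closed
  have hSclosed : IsClosed S := by
    rw [← isOpen_compl_iff]
    rw [isOpen_iff_forall_mem_open]
    rintro ⟨x, y⟩ hp
    -- find least γ with x ∈ U γ
    have hne : {o : Ordinal | ∃ h : o < κ.ord, x ∈ U ⟨o, h⟩}.Nonempty := by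
      have : x ∈ ⋃ α, U α := hUcover ▸ Set.mem_univ x
      obtain ⟨α, hα⟩ := Set.mem_iUnion.1 this
      exact ⟨α.1, α.2, hα⟩
    set T := {o : Ordinal | ∃ h : o < κ.ord, x ∈ U ⟨o, h⟩} with hT
    obtain ⟨hγlt, hxγ⟩ := Ordinal.lt_wf.min_mem T hne
    set γ : Set.Iio κ.ord := ⟨Ordinal.lt_wf.min T hne, hγlt⟩ with hγ
    have hmin : ∀ β : Set.Iio κ.ord, x ∈ U β → γ ≤ β := by
      intro β hβ
      by_contra hlt
      exact Ordinal.lt_wf.not_lt_min T ⟨β.2, hβ⟩ (lt_of_not_ge hlt)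
    have hFx : ∀ β : Set.Iio κ.ord, β < γ → x ∉ U β := by
      intro β hβ hx
      exact absurd hβ (not_lt_of_ge (hmin β hx))
    have hyH : y ∉ H γ := fun hy => hp ⟨γ, hFx, hy⟩
    refine ⟨U γ ×ˢ (H γ)ᶜ, ?_, ((hUopen γ).prod (hHclosed γ).isOpen_compl), ⟨hxγ, hyH⟩⟩
    rintro ⟨x', y'⟩ ⟨hx', hy'⟩ ⟨α, hFα, hHα⟩
    have hαγ : α ≤ γ := le_of_not_gt fun h => hFα γ h hx'
    exact hy' (hHmono hαγ hHα)
  -- image of S is the union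
  have himg : Prod.snd '' S = ⋃ α, H α := by
    ext y
    constructor
    · rintro ⟨⟨x, y⟩, ⟨α, _, hy⟩, rfl⟩
      exact Set.mem_iUnion.2 ⟨α, hy⟩
    · intro hy
      obtain ⟨α, hα⟩ := Set.mem_iUnion.1 hy
      obtain ⟨x, hx⟩ := hF α
      exact ⟨(x, y), ⟨α, hx, hα⟩, rfl⟩
  exact hHunion (himg ▸ hclosed S hSclosed)
end

section
/- Let κ be an infinite cardinal. If X is [κ,∞]-compact (every open cover of X has a subcover of cardinality less than κ) and Y is a space in which every intersection of fewer than κ open sets is open, then the projection π_Y : X × Y → Y is a closed map. -/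
theorem stmt_12 (κ : Cardinal.{u}) (hκ : Cardinal.aleph0 ≤ κ)
    {X Y : Type u} [TopologicalSpace X] [TopologicalSpace Y]
    (hX : ∀ (ι : Type u) (U : ι → Set X), (∀ i, IsOpen (U i)) → ⋃ i, U i = Set.univ →
      ∃ s : Set ι, Cardinal.mk s < κ ∧ ⋃ i ∈ s, U i = Set.univ)
    (hY : ∀ (ι : Type u) (V : ι → Set Y), Cardinal.mk ι < κ → (∀ i, IsOpen (V i)) →
      IsOpen (⋂ i, V i)) :
    IsClosedMap (Prod.snd : X × Y → Y) := by
  intro C hC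
  rw [← isOpen_compl_iff, isOpen_iff_forall_mem_open]
  intro y hy
  have hCc : IsOpen Cᶜ := hC.isOpen_compl
  have key : ∀ x : X, ∃ (U : Set X) (V : Set Y),
      IsOpen U ∧ IsOpen V ∧ x ∈ U ∧ y ∈ V ∧ U ×ˢ V ⊆ Cᶜ := by
    intro x
    have hxy : (x, y) ∈ Cᶜ := fun h => hy ⟨(x, y), h, rfl⟩
    rcases isOpen_prod_iff.mp hCc x y hxy with ⟨U, V, hU, hV, hxU, hyV, hsub⟩
    exact ⟨U, V, hU, hV, hxU, hyV, hsub⟩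
  choose U V hU hV hxU hyV hsub using key
  obtain ⟨s, hs, hcover⟩ := hX X U hU (by
    ext x; simp only [Set.mem_iUnion, Set.mem_univ, iff_true]; exact ⟨x, hxU x⟩)
  refine ⟨⋂ i : s, V i, ?_, ?_, ?_⟩
  · intro y' hy' hmem
    obtain ⟨⟨x', y''⟩, hxyC, rfl⟩ := hmem
    have hx' : x' ∈ ⋃ i ∈ s, U i := hcover ▸ Set.mem_univ x'
    obtain ⟨i, his, hxi⟩ := Set.mem_iUnion₂.mp hx'
    have hv : (x', y'').2 ∈ V i := Set.mem_iInter.mp hy' ⟨i, his⟩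
    exact hsub i ⟨hxi, hv⟩ hxyC
  · exact hY s (fun i => V i) hs (fun i => hV i)
  · exact Set.mem_iInter.mpr fun i => hyV i
end

section
/- If X is a Lindelöf space and Y is a P-space (countable intersections of open sets are open), then the projection π_Y : X × Y → Y is a closed map. -/
open Topology

theorem stmt_13 {X Y : Type*} [TopologicalSpace X] [TopologicalSpace Y]
    [LindelofSpace X]
    (hY : ∀ V : ℕ → Set Y, (∀ n, IsOpen (V n)) → IsOpen (⋂ n, V n)) :
    IsClosedMap (Prod.snd : X × Y → Y) := by
  intro F hF
  rw [← isOpen_compl_iff, isOpen_iff_mem_nhds]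
  intro y hy
  have h : ∀ x : X, ∃ U : Set X, ∃ V : Set Y,
      IsOpen U ∧ IsOpen V ∧ x ∈ U ∧ y ∈ V ∧ Disjoint (U ×ˢ V) F := by
    intro x
    have hxy : (x, y) ∈ Fᶜ := fun h => hy ⟨(x, y), h, rfl⟩
    have hmem : Fᶜ ∈ 𝓝 (x, y) := hF.isOpen_compl.mem_nhds hxy
    rw [nhds_prod_eq, Filter.mem_prod_iff] at hmem
    obtain ⟨U, hU, V, hV, hUV⟩ := hmem
    obtain ⟨U', hU'U, hU'o, hxU'⟩ := mem_nhds_iff.mp hU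
    obtain ⟨V', hV'V, hV'o, hyV'⟩ := mem_nhds_iff.mp hV
    refine ⟨U', V', hU'o, hV'o, hxU', hyV', ?_⟩
    rw [Set.disjoint_left]
    intro p hp hpF
    exact hUV (Set.prod_mono hU'U hV'V hp) hpF
  choose U V hU hV hxU hyV hdisj using h
  obtain ⟨t, htc, htcov⟩ := LindelofSpace.elim_nhds_subcover U
    (fun x => (hU x).mem_nhds (hxU x))
  rcases t.eq_empty_or_nonempty with rfl | hne
  · -- then X is empty
    have hXempty : IsEmpty X := by
      by_contra h
      rw [not_isEmpty_iff] at h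
      obtain ⟨x⟩ := h
      have := htcov ▸ Set.mem_univ x
      simp at this
    refine Filter.mem_of_superset Filter.univ_mem ?_
    intro z _ hz
    obtain ⟨⟨x, _⟩, _, _⟩ := hz
    exact hXempty.elim x
  · obtain ⟨f, rfl⟩ := htc.exists_eq_range hne
    have hWopen : IsOpen (⋂ n, V (f n)) := hY _ fun n => hV (f n)
    have hyW : y ∈ ⋂ n, V (f n) := Set.mem_iInter.mpr fun n => hyV (f n)
    refine Filter.mem_of_superset (hWopen.mem_nhds hyW) ?_
    intro z hz hzim
    obtain ⟨⟨x, y'⟩, hpF, rfl⟩ := hzim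
    have hx : x ∈ ⋃ x' ∈ Set.range f, U x' := htcov ▸ Set.mem_univ x
    simp only [Set.mem_iUnion, Set.mem_range] at hx
    obtain ⟨x', ⟨n, rfl⟩, hxU'⟩ := hx
    exact Set.disjoint_left.mp (hdisj (f n)) ⟨hxU', Set.mem_iInter.mp hz n⟩ hpF
end

section
/- If X is a Lindelöf space that is not compact and Y is a topological space that is not a P-space (there is a countable family of open sets whose intersection is not open), then the projection π_Y : X × Y → Y is not a closed map. -/
open Set

theorem stmt_14 {X Y : Type*} [TopologicalSpace X] [TopologicalSpace Y]
    [LindelofSpace X] (hX : ¬ CompactSpace X)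
    (hY : ∃ V : ℕ → Set Y, (∀ n, IsOpen (V n)) ∧ ¬ IsOpen (⋂ n, V n)) :
    ¬ IsClosedMap (Prod.snd : X × Y → Y) := by
  intro hclosed
  obtain ⟨V, hVopen, hVnot⟩ := hY
  -- extract a countable open cover of X with no finite subcover
  have hnc : ¬ IsCompact (univ : Set X) := fun h => hX ⟨h⟩
  rw [isCompact_iff_finite_subcover] at hnc
  push_neg at hnc
  obtain ⟨ι, U, hUopen, hUcov, hnofin⟩ := hnc
  obtain ⟨r, hrc, hrcov⟩ := isLindelof_univ.elim_countable_subcover U hUopen hUcov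
  have hrne : r.Nonempty := by
    rcases r.eq_empty_or_nonempty with h | h
    · exfalso
      subst h
      simp only [mem_empty_iff_false, iUnion_of_empty, iUnion_empty,
        subset_empty_iff, univ_eq_empty_iff] at hrcov
      exact hX inferInstance
    · exact h
  obtain ⟨f, hf⟩ := hrc.exists_eq_range hrne
  -- W n : increasing open cover, no W n = univ
  set W : ℕ → Set X := fun n => ⋃ k ∈ Finset.range (n + 1), U (f k) with hW
  have hWopen : ∀ n, IsOpen (W n) := fun n =>
    isOpen_biUnion fun k _ => hUopen (f k)
  have hWmono : Monotone W := by
    intro a b hab x hx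
    simp only [hW, mem_iUnion, exists_prop, Finset.mem_range] at hx ⊢
    obtain ⟨k, hk, h⟩ := hx
    exact ⟨k, by omega, h⟩
  have hWcov : ∀ x : X, ∃ n, x ∈ W n := by
    intro x
    have := hrcov (mem_univ x)
    simp only [mem_iUnion] at this
    obtain ⟨i, hi, hxi⟩ := this
    rw [hf] at hi
    obtain ⟨k, rfl⟩ := hi
    exact ⟨k, mem_biUnion (Finset.mem_range.2 (Nat.lt_succ_self k)) hxi⟩
  have hWne : ∀ n, ∃ x : X, x ∉ W n := by
    intro n
    by_contra h
    push_neg at h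
    classical
    refine hnofin ((Finset.range (n + 1)).image f) ?_
    intro x _
    have hx := h x
    simp only [hW, mem_iUnion, exists_prop] at hx
    obtain ⟨k, hk, hxk⟩ := hx
    exact mem_biUnion (Finset.mem_image_of_mem f hk) hxk
  -- G n : decreasing open sets
  set G : ℕ → Set Y := fun n => ⋂ k ∈ Finset.range (n + 1), V k with hG
  have hGopen : ∀ n, IsOpen (G n) := fun n =>
    isOpen_biInter_finset fun k _ => hVopen k

  have hGsub : ∀ n, (⋂ k, V k) ⊆ G n := by
    intro n y hy
    exact mem_iInter₂.2 fun k _ => mem_iInter.1 hy k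
  -- the closed set
  set A : Set (X × Y) := ⋂ n, ((W n)ᶜ ×ˢ (univ : Set Y)) ∪ ((univ : Set X) ×ˢ (G n)ᶜ) with hA
  have hAclosed : IsClosed A :=
    isClosed_iInter fun n =>
      ((IsClosed.prod (hWopen n).isClosed_compl isClosed_univ).union
        (IsClosed.prod isClosed_univ (hGopen n).isClosed_compl))
  have hmem : ∀ x y, (x, y) ∈ A ↔ ∀ n, x ∈ W n → y ∉ G n := by
    intro x y
    simp only [hA, mem_iInter, mem_union, mem_prod, mem_univ, and_true, true_and,
      mem_compl_iff]
    constructor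
    · intro h n hx
      rcases h n with h' | h'
      · exact absurd hx h'
      · exact h'
    · intro h n
      by_cases hx : x ∈ W n
      · exact Or.inr (h n hx)
      · exact Or.inl hx
  have himg : Prod.snd '' A = (⋂ n, V n)ᶜ := by
    ext y
    simp only [mem_image, mem_compl_iff, mem_iInter, Prod.exists, exists_and_right,
      exists_eq_right]
    constructor
    · rintro ⟨x, hxy⟩
      rw [hmem] at hxy
      obtain ⟨n, hn⟩ := hWcov x
      intro hall
      exact hxy n hn (hGsub n (by simpa [mem_iInter] using hall))
    · intro h
      push_neg at h
      obtain ⟨m, hm⟩ := h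
      obtain ⟨x, hx⟩ := hWne m
      refine ⟨x, (hmem x y).2 fun n hxn hyn => ?_⟩
      have hnm : m < n := by
        by_contra hle
        push_neg at hle
        exact hx (hWmono hle hxn)
      have : y ∈ V m := by
        have := mem_iInter₂.1 hyn m (Finset.mem_range.2 (by omega))
        exact this
      exact hm this
  have := hclosed A hAclosed
  rw [himg] at this
  exact hVnot (by simpa using this.isOpen_compl)
end

section
/- Let κ be an infinite cardinal and let Y = ∏_{α<κ} Y_α be a product of topological spaces each of which contains a nonempty proper closed subset. If X is a topological space such that the projection π_Y : X × Y → Y is a closed map, then X is initially κ-compact: every open cover of X of cardinality at most κ has a finite subcover. -/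
theorem stmt_15 (κ : Cardinal) (hκ : Cardinal.aleph0 ≤ κ)
    {X : Type*} [TopologicalSpace X]
    (Y : Set.Iio κ.ord → Type*) [∀ α, TopologicalSpace (Y α)]
    (hY : ∀ α, ∃ C : Set (Y α), C.Nonempty ∧ C ≠ Set.univ ∧ IsClosed C)
    (h : IsClosedMap (Prod.snd : X × (∀ α, Y α) → ∀ α, Y α)) :
    ∀ (ι : Type*) (U : ι → Set X), Cardinal.mk ι ≤ κ → (∀ i, IsOpen (U i)) →
      ⋃ i, U i = Set.univ → ∃ t : Finset ι, ⋃ i ∈ t, U i = Set.univ := by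
  classical
  intro ι U hι hUopen hUcov
  by_contra hcon
  push_neg at hcon
  -- for each finite set, a point not covered
  have hfin : ∀ t : Finset ι, ∃ x : X, ∀ i ∈ t, x ∉ U i := by
    intro t
    have := hcon t
    rw [Set.ne_univ_iff_exists_notMem] at this
    obtain ⟨x, hx⟩ := this
    exact ⟨x, fun i hi hxi => hx (Set.mem_biUnion hi hxi)⟩
  -- choose data in each factor
  choose C hCne hCprop hCcl using hY
  choose p hp using hCne
  have hq : ∀ α, ∃ y : Y α, y ∉ C α := fun α =>
    Set.ne_univ_iff_exists_notMem _ |>.1 (hCprop α)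
  choose q hqnot using hq
  -- embedding of ι into the index set
  have hemb : Nonempty (ι ↪ Set.Iio κ.ord) := by
    rw [← Cardinal.lift_mk_le']
    rw [Ordinal.mk_Iio_ordinal, Cardinal.card_ord]
    simp only [Cardinal.lift_lift]
    exact Cardinal.lift_le.2 hι
  obtain ⟨f⟩ := hemb
  -- the closed set A
  set A : Set (X × ∀ α, Y α) :=
    ⋂ i : ι, ((U i)ᶜ ×ˢ Set.univ ∪ Set.univ ×ˢ ((fun y : ∀ α, Y α => y (f i)) ⁻¹' C (f i)))
    with hA
  have hAcl : IsClosed A := by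
    refine isClosed_iInter fun i => IsClosed.union ?_ ?_
    · exact (isClosed_compl_iff.2 (hUopen i)).prod isClosed_univ
    · exact isClosed_univ.prod ((hCcl (f i)).preimage (continuous_apply (f i)))
  have hmem : ∀ z : X × ∀ α, Y α, z ∈ A ↔ ∀ i : ι, z.1 ∉ U i ∨ z.2 (f i) ∈ C (f i) := by
    intro z
    simp [hA, Set.mem_iInter, Set.mem_prod]
  have him : IsClosed (Prod.snd '' A) := h A hAcl
  -- q is not in the image
  have hqnotim : q ∉ Prod.snd '' A := by
    rintro ⟨⟨x, y⟩, hzy, rfl⟩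
    rw [hmem] at hzy
    have hx : x ∈ ⋃ i, U i := hUcov ▸ Set.mem_univ x
    obtain ⟨_, ⟨i, rfl⟩, hxi⟩ := hx
    rcases hzy i with h1 | h2
    · exact h1 hxi
    · exact hqnot (f i) h2
  -- but q is in the closure of the image
  have hqcl : q ∈ closure (Prod.snd '' A) := by
    rw [mem_closure_iff]
    intro W hW hqW
    obtain ⟨I, u, hu, hsub⟩ := isOpen_pi_iff.1 hW q hqW
    set t : Finset ι := I.preimage f f.injective.injOn with ht
    obtain ⟨x, hx⟩ := hfin t
    set y : ∀ α, Y α := fun α => if α ∈ I then q α else p α with hy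
    refine ⟨y, ?_, ⟨(x, y), ?_, rfl⟩⟩
    · apply hsub
      intro α hα
      simp only [hy]
      rw [if_pos (Finset.mem_coe.1 hα)]
      exact (hu α hα).2
    · rw [hmem]
      intro i
      by_cases hfi : f i ∈ I
      · exact Or.inl (hx i (Finset.mem_preimage.2 hfi))
      · right
        simp only [hy]
        rw [if_neg hfi]
        exact hp (f i)
  rw [him.closure_eq] at hqcl
  exact hqnotim hqcl
end

section
/- Let κ be an infinite cardinal and Y = ∏_{α<κ} Y_α where each Y_α contains a nonempty proper closed subset C_α. For α < κ set H_α = ∏_{β≤α} Y_β × ∏_{α<β<κ} C_β. Then for every infinite cardinal λ ≤ κ, the family {H_α : α < λ} is an increasing family of closed subsets of Y whose union is not closed. -/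
theorem stmt_16 (κ : Cardinal) (hκ : Cardinal.aleph0 ≤ κ)
    (Y : Set.Iio κ.ord → Type*) [∀ α, TopologicalSpace (Y α)]
    (C : ∀ α, Set (Y α)) (hne : ∀ α, (C α).Nonempty) (hproper : ∀ α, C α ≠ Set.univ)
    (hclosed : ∀ α, IsClosed (C α))
    (H : Set.Iio κ.ord → Set (∀ α, Y α))
    (hH : ∀ α, H α = {y | ∀ β, α < β → y β ∈ C β})
    (l : Cardinal) (hl : Cardinal.aleph0 ≤ l) (hlκ : l ≤ κ) :
    (∀ α, IsClosed (H α)) ∧ Monotone H ∧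
      ¬ IsClosed (⋃ α : {a : Set.Iio κ.ord // a.1 < l.ord}, H α.1) := by
  -- choose elements in and out of C β
  choose c hc using hne
  have hproper' : ∀ β, ∃ x, x ∉ C β := fun β => by
    rcases Set.ne_univ_iff_exists_notMem _ |>.mp (hproper β) with ⟨x, hx⟩
    exact ⟨x, hx⟩
  choose d hd using hproper'
  have hlim : Order.IsSuccLimit l.ord := Cardinal.isSuccLimit_ord hl
  have hlκ' : l.ord ≤ κ.ord := Cardinal.ord_le_ord.mpr hlκ
  refine ⟨?_, ?_, ?_⟩
  · intro α
    rw [hH]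
    have he : {y : ∀ β, Y β | ∀ β, α < β → y β ∈ C β}
        = ⋂ β, ⋂ (_ : α < β), (fun y => y β) ⁻¹' C β := by
      ext y; simp
    rw [he]
    exact isClosed_iInter fun β => isClosed_iInter fun _ =>
      (hclosed β).preimage (continuous_apply β)
  · intro a b hab
    rw [hH, hH]
    intro y hy β hβ
    exact hy β (lt_of_le_of_lt hab hβ)
  · intro hU
    set U := ⋃ α : {a : Set.Iio κ.ord // a.1 < l.ord}, H α.1 with hUdef
    set y : ∀ β, Y β := fun β => if (β : Ordinal) < l.ord then d β else c β with hy
    have hyU : y ∉ U := by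
      rw [hUdef]
      simp only [Set.mem_iUnion, not_exists]
      rintro ⟨⟨a, haκ⟩, hal⟩ hmem
      rw [hH] at hmem
      have ha1 : a + 1 < l.ord := hlim.add_one_lt hal
      have ha1κ : a + 1 < κ.ord := lt_of_lt_of_le ha1 hlκ'
      have := hmem ⟨a + 1, ha1κ⟩ (by exact_mod_cast (lt_add_one a : a < a + 1))
      simp only [hy] at this
      rw [if_pos ha1] at this
      exact hd _ this
    have hycl : y ∈ closure U := by
      rw [mem_closure_iff]
      intro o ho hyo
      rcases isOpen_pi_iff.mp ho y hyo with ⟨I, u, hu, hsub⟩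
      -- sup of the small coordinates
      set I' : Finset (Set.Iio κ.ord) := I.filter (fun β => (β : Ordinal) < l.ord) with hI'
      set s : Ordinal := I'.sup (fun β => (β : Ordinal)) with hs
      have hsl : s < l.ord := by
        apply Finset.sup_lt_iff (by simpa using hlim.pos) |>.mpr
        intro β hβ
        exact (Finset.mem_filter.mp hβ).2
      have hsκ : s < κ.ord := lt_of_lt_of_le hsl hlκ'
      set z : ∀ β, Y β := fun β => if (β : Ordinal) ≤ s then d β else c β with hz
      have hzH : z ∈ H ⟨s, hsκ⟩ := by
        rw [hH]
        intro β hβ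
        have : ¬ (β : Ordinal) ≤ s := not_le.mpr hβ
        simp only [hz]
        rw [if_neg this]
        exact hc β
      have hzy : ∀ β ∈ I, z β = y β := by
        intro β hβ
        by_cases h : (β : Ordinal) < l.ord
        · have hβI' : β ∈ I' := Finset.mem_filter.mpr ⟨hβ, h⟩
          have hβs : (β : Ordinal) ≤ s := Finset.le_sup hβI'
          simp only [hz, hy]
          rw [if_pos hβs, if_pos h]
        · have hβs : ¬ (β : Ordinal) ≤ s := by
            push_neg at h
            exact not_le.mpr (lt_of_lt_of_le hsl h)
          simp only [hz, hy]
          rw [if_neg hβs, if_neg (by push_neg at h; exact not_lt.mpr h)]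
      have hzo : z ∈ o := by
        apply hsub
        intro β hβ
        change u β (z β)
        have := (hu β hβ).2
        rw [hzy β hβ]
        exact this
      have hzU : z ∈ U := by
        rw [hUdef]
        exact Set.mem_iUnion.mpr ⟨⟨⟨s, hsκ⟩, hsl⟩, hzH⟩
      exact ⟨z, hzo, hzU⟩
    exact hyU (hU.closure_eq ▸ hycl)
end
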